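/- Let H = H_Γ be the right-angled Artin group of a finite graph Γ = (V,E). For a subset A ⊆ V denote by [A] ⊆ H the subgroup generated by A. Then for any two subsets A, B ⊆ V one has [A] ∩ [B] = [A ∩ B]. -/

import Mathlib

/-- The commutator relations of the right-angled Artin group of a graph. -/
def raagRels {V : Type} (G : SimpleGraph V) : Set (FreeGroup V) :=
  {w | ∃ u v : V, G.Adj u v ∧
    w = FreeGroup.of u * FreeGroup.of v * (FreeGroup.of u)⁻¹ * (FreeGroup.of v)⁻¹}

/-- The right-angled Artin group of a graph. -/
abbrev RAAG {V : Type} (G : SimpleGraph V) := PresentedGroup (raagRels G)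

/-- The generator of `RAAG G` corresponding to a vertex. -/
def raagGen {V : Type} (G : SimpleGraph V) (v : V) : RAAG G := PresentedGroup.of v

open Classical

lemma raag_comm {V : Type} (G : SimpleGraph V) {u v : V} (h : G.Adj u v) :
    raagGen G u * raagGen G v * (raagGen G u)⁻¹ * (raagGen G v)⁻¹ = 1 := by
  have hm : raagGen G u * raagGen G v * (raagGen G u)⁻¹ * (raagGen G v)⁻¹ =
      PresentedGroup.mk (raagRels G)
        (FreeGroup.of u * FreeGroup.of v * (FreeGroup.of u)⁻¹ * (FreeGroup.of v)⁻¹) := by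
    simp [raagGen, PresentedGroup.of]
  rw [hm]
  have : (FreeGroup.of u * FreeGroup.of v * (FreeGroup.of u)⁻¹ * (FreeGroup.of v)⁻¹) ∈
      Subgroup.normalClosure (raagRels G) :=
    Subgroup.subset_normalClosure ⟨u, v, h, rfl⟩
  exact (QuotientGroup.eq_one_iff _).mpr this

/-- the retraction map on generators -/
noncomputable def raagRetFun {V : Type} (G : SimpleGraph V) (S : Set V) (v : V) : RAAG G :=
  if v ∈ S then raagGen G v else 1

lemma raagRet_rels {V : Type} (G : SimpleGraph V) (S : Set V) :
    ∀ r ∈ raagRels G, FreeGroup.lift (raagRetFun G S) r = 1 := by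
  rintro r ⟨u, v, huv, rfl⟩
  simp only [map_mul, map_inv, FreeGroup.lift_apply_of]
  unfold raagRetFun
  by_cases hu : u ∈ S <;> by_cases hv : v ∈ S
  · simpa [hu, hv] using raag_comm G huv
  · simp [hu, hv]
  · simp [hu, hv]
  · simp [hu, hv]

/-- The retraction `RAAG G → RAAG G` killing generators outside `S`. -/
noncomputable def raagRet {V : Type} (G : SimpleGraph V) (S : Set V) : RAAG G →* RAAG G :=
  PresentedGroup.toGroup (raagRet_rels G S)

lemma raagRet_gen {V : Type} (G : SimpleGraph V) (S : Set V) (v : V) :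
    raagRet G S (raagGen G v) = if v ∈ S then raagGen G v else 1 :=
  PresentedGroup.toGroup.of _

lemma raagRet_fix {V : Type} (G : SimpleGraph V) (S : Set V) {g : RAAG G}
    (hg : g ∈ Subgroup.closure (raagGen G '' S)) : raagRet G S g = g := by
  induction hg using Subgroup.closure_induction with
  | mem x hx =>
    obtain ⟨v, hv, rfl⟩ := hx
    rw [raagRet_gen, if_pos hv]
  | one => simp
  | mul x y _ _ hx hy => simp [map_mul, hx, hy]
  | inv x _ hx => simp [map_inv, hx]

lemma raagRet_mem {V : Type} (G : SimpleGraph V) (S : Set V) (g : RAAG G) :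
    raagRet G S g ∈ Subgroup.closure (raagGen G '' S) := by
  refine PresentedGroup.generated_by _ ((Subgroup.closure (raagGen G '' S)).comap (raagRet G S))
    (fun v => ?_) g
  rw [Subgroup.mem_comap]
  have hv' : (PresentedGroup.of v : RAAG G) = raagGen G v := rfl
  rw [hv', raagRet_gen]
  by_cases hv : v ∈ S
  · rw [if_pos hv]; exact Subgroup.subset_closure ⟨v, hv, rfl⟩
  · rw [if_neg hv]; exact one_mem _

lemma raagRet_comp {V : Type} (G : SimpleGraph V) (A B : Set V) :
    (raagRet G A).comp (raagRet G B) = raagRet G (A ∩ B) := by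
  apply PresentedGroup.ext
  intro v
  show raagRet G A (raagRet G B (raagGen G v)) = raagRet G (A ∩ B) (raagGen G v)
  rw [raagRet_gen G B, raagRet_gen G (A ∩ B)]
  by_cases hb : v ∈ B
  · rw [if_pos hb, raagRet_gen]
    by_cases ha : v ∈ A
    · rw [if_pos ha, if_pos ⟨ha, hb⟩]
    · rw [if_neg ha, if_neg (fun h => ha h.1)]
  · rw [if_neg hb, map_one, if_neg (fun h => hb h.2)]

theorem stmt3 {V : Type} (G : SimpleGraph V) (A B : Set V) :
    Subgroup.closure (raagGen G '' A) ⊓ Subgroup.closure (raagGen G '' B) =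
      Subgroup.closure (raagGen G '' (A ∩ B)) := by
  apply le_antisymm
  · rintro g ⟨hA, hB⟩
    have : raagRet G (A ∩ B) g = g := by
      have := congrArg (fun f => f g) (raagRet_comp G A B)
      simp only [MonoidHom.comp_apply] at this
      rw [← this, raagRet_fix G B hB, raagRet_fix G A hA]
    rw [← this]
    exact raagRet_mem G (A ∩ B) g
  · exact le_inf
      (Subgroup.closure_mono (Set.image_mono Set.inter_subset_left))
      (Subgroup.closure_mono (Set.image_mono Set.inter_subset_right))
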